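/- Let S be a set of prime numbers, let G be an abelian group, and let H be a subgroup of G such that the quotient group G/H is isomorphic to ℚ_S/ℤ. If H is S-divisible, then the quotient homomorphism π : G → G/H admits a group-homomorphism section (i.e. the extension splits), and consequently G is isomorphic to the direct sum H ⊕ (G/H). -/

import Mathlib

open scoped TensorProduct

/-- `ℚ_S`: the additive subgroup of `ℚ` of rationals whose lowest-terms denominator
has all of its prime factors in `S`. -/
def ratSubgroup (S : Set ℕ) : AddSubgroup ℚ where
  carrier := {q : ℚ | ∀ p : ℕ, p.Prime → p ∣ q.den → p ∈ S}
  zero_mem' := by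
    intro p hp hdvd
    rw [Rat.den_zero, Nat.dvd_one] at hdvd
    exact absurd (hdvd ▸ hp) Nat.not_prime_one
  add_mem' := by
    intro a b ha hb p hp hdvd
    rcases (Nat.Prime.dvd_mul hp).mp (hdvd.trans (Rat.add_den_dvd a b)) with h | h
    · exact ha p hp h
    · exact hb p hp h
  neg_mem' := by
    intro a ha p hp hdvd
    rw [Rat.den_neg_eq_den] at hdvd
    exact ha p hp hdvd

theorem one_mem_ratSubgroup (S : Set ℕ) : (1 : ℚ) ∈ ratSubgroup S := by
  intro p hp hdvd
  rw [Rat.den_one, Nat.dvd_one] at hdvd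
  exact absurd (hdvd ▸ hp) Nat.not_prime_one

/-- `ℚ_S/ℤ`: the quotient of `ℚ_S` by its subgroup of integers (the multiples of `1`). -/
def ratSubgroupModZ (S : Set ℕ) : Type :=
  ratSubgroup S ⧸ AddSubgroup.zmultiples (⟨1, one_mem_ratSubgroup S⟩ : ratSubgroup S)

noncomputable instance (S : Set ℕ) : AddCommGroup (ratSubgroupModZ S) :=
  inferInstanceAs (AddCommGroup (ratSubgroup S ⧸ AddSubgroup.zmultiples
    (⟨1, one_mem_ratSubgroup S⟩ : ratSubgroup S)))

-- every element of ratSubgroupModZ is torsion with order supported in S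
theorem ratSubgroupModZ_torsion (S : Set ℕ) (y : ratSubgroupModZ S) :
    ∃ m : ℕ, 0 < m ∧ m • y = 0 ∧ ∀ p : ℕ, p.Prime → p ∣ m → p ∈ S := by
  obtain ⟨x, rfl⟩ := QuotientAddGroup.mk_surjective
    (y : ratSubgroup S ⧸ AddSubgroup.zmultiples (⟨1, one_mem_ratSubgroup S⟩ : ratSubgroup S))
  refine ⟨(x : ℚ).den, (x : ℚ).pos, ?_, fun p hp hd => x.2 p hp hd⟩
  have hmem : ((x : ℚ).den : ℕ) • x ∈
      AddSubgroup.zmultiples (⟨1, one_mem_ratSubgroup S⟩ : ratSubgroup S) := by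
    rw [AddSubgroup.mem_zmultiples_iff]
    refine ⟨(x : ℚ).num, ?_⟩
    apply Subtype.ext
    push_cast
    rw [zsmul_eq_mul, nsmul_eq_mul, mul_one, mul_comm]
    exact_mod_cast (Rat.mul_den_eq_num (x : ℚ)).symm
  show ((x : ℚ).den : ℕ) • (QuotientAddGroup.mk x : ratSubgroup S ⧸ AddSubgroup.zmultiples
      (⟨1, one_mem_ratSubgroup S⟩ : ratSubgroup S)) = 0
  rw [← QuotientAddGroup.mk_nsmul, QuotientAddGroup.eq_zero_iff]
  exact hmem

theorem smul_surj_of_primes {A : Type} [AddCommMonoid A] {S : Set ℕ}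
    (h : ∀ p ∈ S, ∀ a : A, ∃ b : A, p • b = a) :
    ∀ m : ℕ, 0 < m → (∀ p : ℕ, p.Prime → p ∣ m → p ∈ S) → ∀ a : A, ∃ b : A, m • b = a := by
  intro m
  induction m using Nat.strong_induction_on with
  | _ m ih =>
    intro hm hfac a
    rcases eq_or_ne m 1 with rfl | hne
    · exact ⟨a, one_nsmul a⟩
    · obtain ⟨p, hp, hpd⟩ := Nat.exists_prime_and_dvd hne
      obtain ⟨k, hk⟩ := hpd
      have hkpos : 0 < k := by
        rcases Nat.eq_zero_or_pos k with rfl | h'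
        · omega
        · exact h'
      have hklt : k < m := by
        have := hp.two_le
        calc k < 2 * k := by omega
          _ ≤ p * k := Nat.mul_le_mul_right k this
          _ = m := hk.symm
      obtain ⟨b, hb⟩ := h p (hfac p hp ⟨k, hk⟩) a
      obtain ⟨c, hc⟩ := ih k hklt hkpos
        (fun r hr hrd => hfac r hr (hrd.trans ⟨p, by rw [hk, mul_comm]⟩)) b
      refine ⟨c, ?_⟩
      rw [hk, mul_comm, mul_nsmul, hc, hb]


section Aux

variable {G : Type} [AddCommGroup G]

theorem exists_section_aux (H : AddSubgroup G)
    (D : ∀ q : G ⧸ H, ∃ m : ℕ, 0 < m ∧ m • q = 0 ∧ ∀ a : H, ∃ b : H, m • b = a) :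
    ∃ s : (G ⧸ H) →+ G,
      (QuotientAddGroup.mk' H).comp s = AddMonoidHom.id (G ⧸ H) := by
  set Q := G ⧸ H
  set π := QuotientAddGroup.mk' H with hπ
  set 𝒮 : Set (AddSubgroup (Q × G)) :=
    {L | (∀ x : Q × G, x ∈ L → π x.2 = x.1) ∧ (∀ g : G, ((0 : Q), g) ∈ L → g = 0)} with h𝒮
  have hbot : (⊥ : AddSubgroup (Q × G)) ∈ 𝒮 := by
    constructor
    · intro x hx
      rw [AddSubgroup.mem_bot] at hx
      rw [hx]; simp
    · intro g hg
      rw [AddSubgroup.mem_bot, Prod.mk.injEq] at hg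
      exact hg.2
  have hub : ∀ c ⊆ 𝒮, IsChain (· ≤ ·) c → ∀ y ∈ c, ∃ ub ∈ 𝒮, ∀ z ∈ c, z ≤ ub := by
    intro c hc hchain y hy
    refine ⟨sSup c, ?_, fun z hz => le_sSup hz⟩
    have hdir : DirectedOn (· ≤ ·) c := hchain.directedOn
    have hmem : ∀ x : Q × G, x ∈ sSup c ↔ ∃ L ∈ c, x ∈ L := fun x =>
      AddSubgroup.mem_sSup_of_directedOn ⟨y, hy⟩ hdir
    constructor
    · intro x hx
      obtain ⟨L, hLc, hxL⟩ := (hmem x).mp hx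
      exact (hc hLc).1 x hxL
    · intro g hg
      obtain ⟨L, hLc, hxL⟩ := (hmem _).mp hg
      exact (hc hLc).2 g hxL
  obtain ⟨L, -, hL𝒮, hLmax⟩ := zorn_le_nonempty₀ 𝒮 hub ⊥ hbot
  have uniq : ∀ q : Q, ∀ g g' : G, (q, g) ∈ L → (q, g') ∈ L → g = g' := by
    intro q g g' hg hg'
    have h0 : ((0 : Q), g - g') ∈ L := by simpa using L.sub_mem hg hg'
    exact sub_eq_zero.mp (hL𝒮.2 _ h0)
  set K : AddSubgroup Q := L.map (AddMonoidHom.fst Q G) with hK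
  have htot : ∀ q : Q, ∃ g : G, (q, g) ∈ L := by
    by_contra hcon
    push_neg at hcon
    obtain ⟨q, hq⟩ := hcon
    obtain ⟨m, hm0, hmq, hmdiv⟩ := D q
    set A : AddSubgroup ℤ := K.comap ((zmultiplesHom Q) q) with hA
    obtain ⟨a, ha⟩ := Int.subgroup_cyclic A
    rw [← AddSubgroup.zmultiples_eq_closure] at ha
    have hmemA : ∀ t : ℤ, t • q ∈ K ↔ a ∣ t := by
      intro t
      have : t • q ∈ K ↔ t ∈ A := Iff.rfl
      rw [this, ha, Int.mem_zmultiples_iff]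
    have hmA : a ∣ (m : ℤ) := by
      rw [← hmemA]
      have : (m : ℤ) • q = 0 := by rw [natCast_zsmul, hmq]
      rw [this]
      exact K.zero_mem
    have hane : a ≠ 0 := by
      rintro rfl
      rw [zero_dvd_iff] at hmA
      exact_mod_cast hm0.ne' (by exact_mod_cast hmA)
    set m₀ : ℕ := a.natAbs with hm₀
    have hm₀pos : 0 < m₀ := Int.natAbs_pos.mpr hane
    have ham₀ : a ∣ (m₀ : ℤ) := Int.dvd_natAbs.mpr dvd_rfl
    have hm₀m : m₀ ∣ m := by
      have := Int.natAbs_dvd_natAbs.mpr hmA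
      simpa using this
    obtain ⟨e, hme⟩ := hm₀m
    -- find the pair over m₀ • q
    have hm₀K : (m₀ : ℤ) • q ∈ K := (hmemA _).mpr ham₀
    obtain ⟨x₀, hx₀L, hx₀1⟩ := hm₀K
    obtain ⟨g, hg⟩ := QuotientAddGroup.mk'_surjective H q
    have hx₀2 : π x₀.2 = (m₀ : ℤ) • q := by rw [hL𝒮.1 x₀ hx₀L]; exact hx₀1
    have hmemH : ((m₀ : ℤ) • g - x₀.2) ∈ H := by
      rw [← QuotientAddGroup.eq_zero_iff]
      have : π ((m₀ : ℤ) • g - x₀.2) = 0 := by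
        rw [map_sub, map_zsmul, hg, hx₀2, sub_self]
      exact this
    -- divide in H
    obtain ⟨b', hb'⟩ := hmdiv ⟨_, hmemH⟩
    set b : H := e • b' with hb
    have hbval : (m₀ : ℤ) • (b : G) = (m₀ : ℤ) • g - x₀.2 := by
      have : m₀ • b = ⟨(m₀ : ℤ) • g - x₀.2, hmemH⟩ := by
        rw [hb, ← mul_smul, ← hme, hb']
      calc (m₀ : ℤ) • (b : G) = ((m₀ • b : H) : G) := by
            rw [natCast_zsmul]; norm_cast
        _ = (m₀ : ℤ) • g - x₀.2 := by rw [this]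
    set g' : G := g - (b : G) with hg'
    have hπg' : π g' = q := by
      rw [hg', map_sub, hg]
      have : π (b : G) = 0 := (QuotientAddGroup.eq_zero_iff _).mpr b.2
      rw [this, sub_zero]
    have hm₀g' : (m₀ : ℤ) • g' = x₀.2 := by
      rw [hg', smul_sub, hbval]
      abel
    set L' : AddSubgroup (Q × G) := L ⊔ AddSubgroup.zmultiples (q, g') with hL'
    have hL'𝒮 : L' ∈ 𝒮 := by
      constructor
      · intro x hx
        rw [hL', AddSubgroup.mem_sup] at hx
        obtain ⟨l, hl, z, hz, hlz⟩ := hx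
        obtain ⟨t, rfl⟩ := AddSubgroup.mem_zmultiples_iff.mp hz
        have : π (l.2 + t • g') = l.1 + t • q := by
          rw [map_add, map_zsmul, hπg', hL𝒮.1 l hl]
        rw [← hlz]
        simpa using this
      · intro x hx
        rw [hL', AddSubgroup.mem_sup] at hx
        obtain ⟨l, hl, z, hz, hlz⟩ := hx
        obtain ⟨t, rfl⟩ := AddSubgroup.mem_zmultiples_iff.mp hz
        have h1 : l.1 + t • q = 0 := congrArg Prod.fst hlz
        have h2 : l.2 + t • g' = x := congrArg Prod.snd hlz
        have htq : t • q ∈ K := by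
          have : t • q = -l.1 := eq_neg_of_add_eq_zero_left (by rw [add_comm]; exact h1)
          rw [this]
          exact K.neg_mem ⟨l, hl, rfl⟩
        obtain ⟨u, hu⟩ := (Int.natAbs_dvd.mpr ((hmemA t).mp htq) : (m₀ : ℤ) ∣ t)
        have hzmem : t • (q, g') ∈ L := by
          have : t • (q, g') = u • ((m₀ : ℤ) • (q, g')) := by
            rw [← mul_smul, mul_comm, ← hu]
          rw [this]
          have : (m₀ : ℤ) • (q, g') = x₀ := by
            have : (m₀ : ℤ) • (q, g') = ((m₀ : ℤ) • q, (m₀ : ℤ) • g') := rfl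
            rw [this, hm₀g', ← hx₀1]
            exact Prod.ext rfl rfl
          rw [this]
          exact L.zsmul_mem hx₀L u
        have : ((0 : Q), x) ∈ L := by
          rw [← hlz]
          exact L.add_mem hl hzmem
        exact hL𝒮.2 x this
    have hLL' : L ≤ L' := le_sup_left
    have : L' ≤ L := hLmax hL'𝒮 hLL'
    have : (q, g') ∈ L := this (by
      rw [hL']
      exact (le_sup_right : AddSubgroup.zmultiples (q, g') ≤ L') (AddSubgroup.mem_zmultiples _))
    exact hq g' this
  choose f hf using htot
  have hf0 : f 0 = 0 := hL𝒮.2 _ (hf 0)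
  refine ⟨{ toFun := f, map_zero' := hf0,
            map_add' := fun x y => uniq (x + y) _ _ (hf (x + y)) (L.add_mem (hf x) (hf y)) }, ?_⟩
  ext q
  exact hL𝒮.1 (q, f q) (hf q)

end Aux

/-- If `H ≤ G` with `G/H ≅ ℚ_S/ℤ` and `H` is `S`-divisible, then the quotient
map splits and `G ≅ H ⊕ G/H`. -/
theorem splitting_of_quotient_iso_ratSubgroupModZ
    (S : Set ℕ) (hS : ∀ p ∈ S, p.Prime)
    (G : Type) [AddCommGroup G] (H : AddSubgroup G)
    (hiso : Nonempty ((G ⧸ H) ≃+ ratSubgroupModZ S))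
    (hdiv : ∀ p ∈ S, ∀ a : H, ∃ b : H, p • b = a) :
    (∃ s : (G ⧸ H) →+ G,
        (QuotientAddGroup.mk' H).comp s = AddMonoidHom.id (G ⧸ H)) ∧
      Nonempty (G ≃+ H × (G ⧸ H)) := by
  obtain ⟨e⟩ := hiso
  have D : ∀ q : G ⧸ H, ∃ m : ℕ, 0 < m ∧ m • q = 0 ∧ ∀ a : H, ∃ b : H, m • b = a := by
    intro q
    obtain ⟨m, hm0, hmy, hmS⟩ := ratSubgroupModZ_torsion S (e q)
    refine ⟨m, hm0, ?_, smul_surj_of_primes hdiv m hm0 hmS⟩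
    have : e (m • q) = 0 := by rw [map_nsmul, hmy]
    have := congrArg e.symm this
    rwa [e.symm_apply_apply, map_zero] at this
  obtain ⟨s, hcomp⟩ := exists_section_aux H D
  have hs : ∀ q : G ⧸ H, QuotientAddGroup.mk' H (s q) = q := fun q =>
    DFunLike.congr_fun hcomp q
  refine ⟨⟨s, hcomp⟩, ⟨?_⟩⟩
  set π := QuotientAddGroup.mk' H with hπ
  have hmem : ∀ g : G, g - s (π g) ∈ H := by
    intro g
    rw [← QuotientAddGroup.eq_zero_iff]
    show π (g - s (π g)) = 0
    rw [map_sub, hs, sub_self]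
  have hH0 : ∀ h : H, π (h : G) = 0 := fun h =>
    (QuotientAddGroup.eq_zero_iff _).mpr h.2
  exact
    { toFun := fun g => (⟨g - s (π g), hmem g⟩, π g)
      invFun := fun x => (x.1 : G) + s x.2
      left_inv := fun g => by simp
      right_inv := fun x => by
        have hπx : π ((x.1 : G) + s x.2) = x.2 := by
          rw [map_add, hH0, hs, zero_add]
        refine Prod.ext (Subtype.ext ?_) hπx
        show (x.1 : G) + s x.2 - s (π ((x.1 : G) + s x.2)) = (x.1 : G)
        rw [hπx]
        abel
      map_add' := fun g₁ g₂ => by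
        refine Prod.ext (Subtype.ext ?_) (map_add π g₁ g₂)
        show g₁ + g₂ - s (π (g₁ + g₂)) = (g₁ - s (π g₁)) + (g₂ - s (π g₂))
        rw [map_add, map_add]
        abel }
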